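/- Let D be a positive integer with D ≡ 0 or 1 (mod 4) that is not a perfect square, and write D = f²D₀ where D₀ is a fundamental discriminant and f ≥ 1 (the conductor). Then ∑_{(ℓ,e,m) ∈ P_D} m·∏_{p prime, p ∣ m} (1 + 1/p) = ∑_{(a,b,c) ∈ P₆(D)} a, an identity of rational numbers (both index sets are finite). -/

import Mathlib

open Finset

/-- A positive integer `D₀` is a fundamental discriminant if either
`D₀ ≡ 1 (mod 4)` and `D₀` is squarefree, or `D₀ = 4m` with `m` squarefree and
`m ≡ 2, 3 (mod 4)`. -/
def IsFundamentalDiscriminant (D₀ : ℕ) : Prop :=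
  (D₀ % 4 = 1 ∧ Squarefree D₀) ∨
  (∃ m : ℕ, D₀ = 4 * m ∧ Squarefree m ∧ (m % 4 = 2 ∨ m % 4 = 3))

/-- The prototype set
`P_D = {(ℓ,e,m) ∈ ℤ³ : ℓ > 0, m > 0, D = e² + 24ℓ²m, gcd(e,ℓ,f) = 1}`,
realized as a finset (all members automatically satisfy the coordinate
bounds `|ℓ|,|e|,|m| ≤ D`). -/
noncomputable def protoPD (D f : ℕ) : Finset (ℤ × ℤ × ℤ) :=
  ((Finset.Icc (-(D : ℤ)) (D : ℤ)) ×ˢ (Finset.Icc (-(D : ℤ)) (D : ℤ)) ×ˢ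
      (Finset.Icc (-(D : ℤ)) (D : ℤ))).filter
    (fun x => 0 < x.1 ∧ 0 < x.2.2 ∧ (D : ℤ) = x.2.1 ^ 2 + 24 * x.1 ^ 2 * x.2.2 ∧
      Nat.gcd x.2.1.natAbs (Nat.gcd x.1.natAbs f) = 1)

open Classical in
/-- The prototype set
`P₆(D) = {(a,b,c) ∈ ℤ³ : a > 0 > c, D = b² − 24ac, gcd(f,|b|,s²) = 1}`
where `|c| = c₀ s²` with `c₀` squarefree, realized as a finset. -/
noncomputable def proto6 (D f : ℕ) : Finset (ℤ × ℤ × ℤ) :=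
  ((Finset.Icc (-(D : ℤ)) (D : ℤ)) ×ˢ (Finset.Icc (-(D : ℤ)) (D : ℤ)) ×ˢ
      (Finset.Icc (-(D : ℤ)) (D : ℤ))).filter
    (fun x => 0 < x.1 ∧ x.2.2 < 0 ∧ (D : ℤ) = x.2.1 ^ 2 - 24 * x.1 * x.2.2 ∧
      ∃ c₀ s : ℕ, Squarefree c₀ ∧ x.2.2.natAbs = c₀ * s ^ 2 ∧
        Nat.gcd f (Nat.gcd x.2.1.natAbs (s ^ 2)) = 1)

/-! ### Auxiliary lemmas -/

lemma gcd3_iff (a b c : ℕ) :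
    Nat.gcd a (Nat.gcd b c) = 1 ↔ ∀ p : ℕ, p.Prime → ¬(p ∣ a ∧ p ∣ b ∧ p ∣ c) := by
  rw [Nat.eq_one_iff_not_exists_prime_dvd]
  constructor
  · rintro h p hp ⟨h1, h2, h3⟩
    exact h p hp (Nat.dvd_gcd h1 (Nat.dvd_gcd h2 h3))
  · intro h p hp hd
    exact h p hp ⟨hd.trans (Nat.gcd_dvd_left _ _),
      (hd.trans (Nat.gcd_dvd_right _ _)).trans (Nat.gcd_dvd_left _ _),
      (hd.trans (Nat.gcd_dvd_right _ _)).trans (Nat.gcd_dvd_right _ _)⟩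

lemma gcd_sq_iff (e l f : ℕ) :
    Nat.gcd e (Nat.gcd l f) = 1 ↔ Nat.gcd f (Nat.gcd e (l ^ 2)) = 1 := by
  rw [gcd3_iff, gcd3_iff]
  constructor
  · rintro h p hp ⟨h1, h2, h3⟩
    exact h p hp ⟨h2, hp.dvd_of_dvd_pow h3, h1⟩
  · rintro h p hp ⟨h1, h2, h3⟩
    exact h p hp ⟨h3, h1, dvd_pow h2 two_ne_zero⟩

lemma sq_decomp_unique {c₀ c₁ s₀ s₁ : ℕ} (h₀ : Squarefree c₀) (h₁ : Squarefree c₁)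
    (hs₀ : s₀ ≠ 0) (hs₁ : s₁ ≠ 0) (h : c₀ * s₀ ^ 2 = c₁ * s₁ ^ 2) :
    c₀ = c₁ ∧ s₀ = s₁ := by
  have hc₀ : c₀ ≠ 0 := h₀.ne_zero
  have hc₁ : c₁ ≠ 0 := h₁.ne_zero
  have key : ∀ p : ℕ, c₀.factorization p + 2 * s₀.factorization p
      = c₁.factorization p + 2 * s₁.factorization p := by
    intro p
    have := congrArg (fun n : ℕ => n.factorization p) h
    simpa [Nat.factorization_mul hc₀ (pow_ne_zero 2 hs₀),
      Nat.factorization_mul hc₁ (pow_ne_zero 2 hs₁),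
      Nat.factorization_pow, mul_comm] using this
  have e1 : c₀ = c₁ := by
    apply Nat.factorization_inj hc₀ hc₁
    ext p
    have h1 := key p
    have h2 := h₀.natFactorization_le_one p
    have h3 := h₁.natFactorization_le_one p
    omega
  refine ⟨e1, ?_⟩
  apply Nat.factorization_inj hs₀ hs₁
  ext p
  have h1 := key p
  rw [e1] at h1
  omega

lemma squarefree_prod_primes {T : Finset ℕ} (h : ∀ p ∈ T, p.Prime) :
    Squarefree (∏ p ∈ T, p) := by
  induction T using Finset.cons_induction with
  | empty => simpa using squarefree_one
  | cons p T hp ih =>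
    rw [Finset.prod_cons]
    have hpp : p.Prime := h p (Finset.mem_cons_self _ _)
    have hT : ∀ q ∈ T, q.Prime := fun q hq => h q (Finset.mem_cons_of_mem hq)
    have hcop : Nat.Coprime p (∏ q ∈ T, q) := by
      apply Nat.Coprime.prod_right
      intro q hq
      exact (Nat.coprime_primes hpp (hT q hq)).mpr (by rintro rfl; exact hp hq)
    rw [Nat.squarefree_mul hcop]
    exact ⟨hpp.squarefree, ih hT⟩

lemma prod_one_add_inv (m : ℕ) (hm : m ≠ 0) :
    (m : ℚ) * ∏ p ∈ m.primeFactors, (1 + 1 / (p : ℚ)) =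
    ∑ t ∈ m.divisors.filter Squarefree, ((m / t : ℕ) : ℚ) := by
  have h1 : ∏ p ∈ m.primeFactors, (1 + 1 / (p : ℚ))
      = ∑ T ∈ m.primeFactors.powerset, ∏ p ∈ T, (1 / (p : ℚ)) := by
    simp_rw [add_comm (1 : ℚ)]
    rw [Finset.prod_add]
    simp
  rw [h1, Finset.mul_sum]
  refine Finset.sum_bij' (fun T _ => ∏ p ∈ T, p) (fun t _ => t.primeFactors)
    ?_ ?_ ?_ ?_ ?_
  · intro T hT
    rw [Finset.mem_powerset] at hT
    have hprimes : ∀ p ∈ T, p.Prime := fun p hp =>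
      Nat.prime_of_mem_primeFactors (hT hp)
    rw [Finset.mem_filter, Nat.mem_divisors]
    exact ⟨⟨(Finset.prod_dvd_prod_of_subset _ _ _ hT).trans (Nat.prod_primeFactors_dvd m), hm⟩,
      squarefree_prod_primes hprimes⟩
  · intro t ht
    rw [Finset.mem_filter, Nat.mem_divisors] at ht
    rw [Finset.mem_powerset]
    exact Nat.primeFactors_mono ht.1.1 hm
  · intro T hT
    rw [Finset.mem_powerset] at hT
    exact Nat.primeFactors_prod (fun p hp => Nat.prime_of_mem_primeFactors (hT hp))
  · intro t ht
    rw [Finset.mem_filter] at ht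
    exact Nat.prod_primeFactors_of_squarefree ht.2
  · intro T hT
    rw [Finset.mem_powerset] at hT
    have hprimes : ∀ p ∈ T, p.Prime := fun p hp =>
      Nat.prime_of_mem_primeFactors (hT hp)
    have hdvd : (∏ p ∈ T, p) ∣ m :=
      (Finset.prod_dvd_prod_of_subset _ _ _ hT).trans (Nat.prod_primeFactors_dvd m)
    have hne : ((∏ p ∈ T, p : ℕ) : ℚ) ≠ 0 := by
      exact_mod_cast Finset.prod_ne_zero_iff.mpr (fun p hp => (hprimes p hp).ne_zero)
    rw [Nat.cast_div hdvd hne]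
    rw [Nat.cast_prod]
    rw [div_eq_mul_inv, ← Finset.prod_inv_distrib]
    simp [one_div]

/-- The squarefree part of a natural number. -/
noncomputable def sqf (n : ℕ) : ℕ := (Nat.sq_mul_squarefree n).choose

/-- The square part of a natural number. -/
noncomputable def sqp (n : ℕ) : ℕ := (Nat.sq_mul_squarefree n).choose_spec.choose

lemma sqf_sqp_spec (n : ℕ) : sqp n ^ 2 * sqf n = n ∧ Squarefree (sqf n) :=
  (Nat.sq_mul_squarefree n).choose_spec.choose_spec

lemma sqf_sqp_eq {n c₀ s : ℕ} (hn : n ≠ 0) (h₀ : Squarefree c₀) (h : n = c₀ * s ^ 2) :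
    sqf n = c₀ ∧ sqp n = s := by
  obtain ⟨hspec, hsf⟩ := sqf_sqp_spec n
  have hs : s ≠ 0 := by rintro rfl; simp at h; omega
  have hp : sqp n ≠ 0 := by
    rintro h'
    rw [h'] at hspec
    simp at hspec
    exact hn hspec.symm
  exact sq_decomp_unique hsf h₀ hp hs (by rw [mul_comm (sqp n ^ 2)] at hspec; rw [hspec, h])

set_option maxHeartbeats 1000000 in
/-- The identity from the proof of Lemma 7.6:
`∑_{(ℓ,e,m) ∈ P_D} m ∏_{p ∣ m} (1 + 1/p) = ∑_{(a,b,c) ∈ P₆(D)} a`. -/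
theorem statement1 (D D₀ f : ℕ) (hpos : 0 < D)
    (hmod : D % 4 = 0 ∨ D % 4 = 1) (hns : ¬ IsSquare D)
    (hf : 1 ≤ f) (hD₀ : IsFundamentalDiscriminant D₀) (hfact : D = f ^ 2 * D₀) :
    ∑ x ∈ protoPD D f,
        ((x.2.2 : ℚ) * ∏ p ∈ x.2.2.toNat.primeFactors, (1 + 1 / (p : ℚ)))
      = ∑ x ∈ proto6 D f, (x.1 : ℚ) := by
  have step1 : ∀ x ∈ protoPD D f,
      ((x.2.2 : ℚ) * ∏ p ∈ x.2.2.toNat.primeFactors, (1 + 1 / (p : ℚ)))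
      = ∑ t ∈ x.2.2.toNat.divisors.filter Squarefree, ((x.2.2.toNat / t : ℕ) : ℚ) := by
    intro x hx
    have hm : 0 < x.2.2 := by
      simp only [protoPD, Finset.mem_filter] at hx
      exact hx.2.2.1
    have hcast : ((x.2.2.toNat : ℕ) : ℚ) = ((x.2.2 : ℤ) : ℚ) := by
      exact_mod_cast congrArg (fun z : ℤ => (z : ℚ)) (Int.toNat_of_nonneg hm.le)
    rw [← hcast, prod_one_add_inv _ (by omega)]
  rw [Finset.sum_congr rfl step1, Finset.sum_sigma']
  refine Finset.sum_bij'
    (fun σ _ => (((σ.1.2.2.toNat / σ.2 : ℕ) : ℤ), σ.1.2.1, -(σ.1.1 ^ 2 * (σ.2 : ℤ))))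
    (fun y _ => ⟨(((sqp y.2.2.natAbs : ℕ) : ℤ), y.2.1, y.1 * ((sqf y.2.2.natAbs : ℕ) : ℤ)),
      sqf y.2.2.natAbs⟩) ?_ ?_ ?_ ?_ ?_
  · -- maps into proto6
    rintro ⟨⟨l, e, m⟩, t⟩ hσ
    rw [Finset.mem_sigma] at hσ
    obtain ⟨hx, ht⟩ := hσ
    simp only [protoPD, Finset.mem_filter, Finset.mem_product, Finset.mem_Icc] at hx
    obtain ⟨⟨hlbox, hebox, hmbox⟩, hl, hm, hD, hgcd⟩ := hx
    rw [Finset.mem_filter, Nat.mem_divisors] at ht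
    obtain ⟨⟨htdvd, htne⟩, htsf⟩ := ht
    have ht0 : 0 < t := Nat.pos_of_dvd_of_pos htdvd (Nat.pos_of_ne_zero htne)
    have hmt : ((m.toNat : ℤ)) = m := Int.toNat_of_nonneg hm.le
    have hadvd : ((m.toNat / t : ℕ) : ℤ) * (t : ℤ) = m := by
      rw [← Nat.cast_mul, Nat.div_mul_cancel htdvd, hmt]
    have ha : 0 < ((m.toNat / t : ℕ) : ℤ) := by
      have : 0 < m.toNat / t := Nat.div_pos (Nat.le_of_dvd (by omega) htdvd) ht0
      exact_mod_cast this
    have haM : ((m.toNat / t : ℕ) : ℤ) ≤ m := by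
      calc ((m.toNat / t : ℕ) : ℤ) ≤ (m.toNat : ℤ) := by exact_mod_cast Nat.div_le_self _ _
        _ = m := hmt
    have htM : (t : ℤ) ≤ m := by
      calc (t : ℤ) ≤ (m.toNat : ℤ) := by exact_mod_cast Nat.le_of_dvd (by omega) htdvd
        _ = m := hmt
    have hcM : l ^ 2 * (t : ℤ) ≤ 24 * l ^ 2 * m := by nlinarith
    simp only [proto6, Finset.mem_filter, Finset.mem_product, Finset.mem_Icc]
    refine ⟨⟨⟨?_, ?_⟩, ⟨hebox.1, hebox.2⟩, ⟨?_, ?_⟩⟩, ha, ?_, ?_, t, l.natAbs, htsf, ?_, ?_⟩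
    · omega
    · omega
    · nlinarith [sq_nonneg e]
    · nlinarith
    · nlinarith
    · rw [hD]; ring_nf; nlinarith [hadvd]
    · rw [Int.natAbs_neg, Int.natAbs_mul, Int.natAbs_pow]
      simp [mul_comm]
    · exact (gcd_sq_iff e.natAbs l.natAbs f).mp hgcd
  · -- maps back into the sigma set
    rintro ⟨a, b, c⟩ hy
    simp only [proto6, Finset.mem_filter, Finset.mem_product, Finset.mem_Icc] at hy
    obtain ⟨⟨habox, hbbox, hcbox⟩, ha, hc, hD, c₀, s, hsf, hdecomp, hgcd⟩ := hy
    have hcne : c.natAbs ≠ 0 := by omega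
    obtain ⟨hsqf, hsqp⟩ := sqf_sqp_eq hcne hsf hdecomp
    have hs0 : s ≠ 0 := by rintro rfl; simp at hdecomp; omega
    have hc0 : c₀ ≠ 0 := hsf.ne_zero
    have hs1 : (1 : ℤ) ≤ (s : ℤ) := by exact_mod_cast Nat.one_le_iff_ne_zero.mpr hs0
    have hc1 : (1 : ℤ) ≤ (c₀ : ℤ) := by exact_mod_cast Nat.one_le_iff_ne_zero.mpr hc0
    have hcval : ((c₀ : ℤ)) * (s : ℤ) ^ 2 = -c := by
      have h' : (c.natAbs : ℤ) = -c := by omega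
      rw [← h']; exact_mod_cast hdecomp.symm
    rw [Finset.mem_sigma]
    constructor
    · dsimp only
      simp only [protoPD, Finset.mem_filter, Finset.mem_product, Finset.mem_Icc,
        hsqf, hsqp]
      have e1 : 24 * (a * ((c₀ : ℤ) * (s : ℤ) ^ 2)) = (D : ℤ) - b ^ 2 := by
        rw [hcval]; linarith
      have hac : 0 < a * (c₀ : ℤ) := by nlinarith
      refine ⟨⟨⟨?_, ?_⟩, ⟨hbbox.1, hbbox.2⟩, ⟨?_, ?_⟩⟩, ?_, ?_, ?_, ?_⟩
      · -- -D ≤ s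
        have : (0 : ℤ) ≤ (s : ℤ) := by positivity
        omega
      · -- s ≤ D
        nlinarith [sq_nonneg b, hcbox.1]
      · -- -D ≤ a * c₀
        omega
      · -- a * c₀ ≤ D
        have e3 : (0 : ℤ) < (c₀ : ℤ) * (s : ℤ) ^ 2 := by nlinarith
        have e4 : 0 < a * ((c₀ : ℤ) * (s : ℤ) ^ 2) := mul_pos ha e3
        have e2 : a * (c₀ : ℤ) ≤ a * ((c₀ : ℤ) * (s : ℤ) ^ 2) := by
          nlinarith [mul_nonneg hac.le (show (0 : ℤ) ≤ (s : ℤ) ^ 2 - 1 by nlinarith)]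
        nlinarith [sq_nonneg b]
      · omega
      · exact hac
      · rw [hD]; ring_nf; nlinarith [hcval]
      · have h' := (gcd_sq_iff b.natAbs s f).mpr hgcd
        simpa using h'
    · dsimp only
      simp only [hsqf, hsqp]
      rw [Finset.mem_filter, Nat.mem_divisors]
      have htoNat : (a * (c₀ : ℤ)).toNat = a.toNat * c₀ := by
        have h' : a * (c₀ : ℤ) = ((a.toNat * c₀ : ℕ) : ℤ) := by
          push_cast [Int.toNat_of_nonneg ha.le]; ring
        rw [h', Int.toNat_natCast]
      refine ⟨⟨?_, ?_⟩, hsf⟩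
      · rw [htoNat]; exact dvd_mul_left _ _
      · rw [htoNat]
        have ha' : a.toNat ≠ 0 := by omega
        simp [ha', hc0]
  · -- left inverse
    rintro ⟨⟨l, e, m⟩, t⟩ hσ
    rw [Finset.mem_sigma] at hσ
    obtain ⟨hx, ht⟩ := hσ
    simp only [protoPD, Finset.mem_filter] at hx
    obtain ⟨-, hl, hm, -, -⟩ := hx
    rw [Finset.mem_filter, Nat.mem_divisors] at ht
    obtain ⟨⟨htdvd, htne⟩, htsf⟩ := ht
    have ht0 : 0 < t := Nat.pos_of_dvd_of_pos htdvd (Nat.pos_of_ne_zero htne)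
    have hln : l.natAbs ≠ 0 := by omega
    have hnat : (-(l ^ 2 * (t : ℤ))).natAbs = t * l.natAbs ^ 2 := by
      rw [Int.natAbs_neg, Int.natAbs_mul, Int.natAbs_pow]
      simp [mul_comm]
    have hnne : (-(l ^ 2 * (t : ℤ))).natAbs ≠ 0 := by
      rw [hnat]; positivity
    obtain ⟨hsqf, hsqp⟩ := sqf_sqp_eq hnne htsf hnat
    have h1 : ((l.natAbs : ℕ) : ℤ) = l := Int.natAbs_of_nonneg hl.le
    have h2 : ((m.toNat / t : ℕ) : ℤ) * (t : ℤ) = m := by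
      rw [← Nat.cast_mul, Nat.div_mul_cancel htdvd, Int.toNat_of_nonneg hm.le]
    dsimp only
    rw [hsqf, hsqp, h1, h2]
  · -- right inverse
    rintro ⟨a, b, c⟩ hy
    simp only [proto6, Finset.mem_filter] at hy
    obtain ⟨-, ha, hc, -, c₀, s, hsf, hdecomp, -⟩ := hy
    have hcne : c.natAbs ≠ 0 := by omega
    obtain ⟨hsqf, hsqp⟩ := sqf_sqp_eq hcne hsf hdecomp
    have hc0 : c₀ ≠ 0 := hsf.ne_zero
    have htoNat : (a * (c₀ : ℤ)).toNat = a.toNat * c₀ := by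
      have h' : a * (c₀ : ℤ) = ((a.toNat * c₀ : ℕ) : ℤ) := by
        push_cast [Int.toNat_of_nonneg ha.le]; ring
      rw [h', Int.toNat_natCast]
    have h1 : ((((a * (c₀ : ℤ)).toNat / c₀ : ℕ)) : ℤ) = a := by
      rw [htoNat, Nat.mul_div_cancel _ (Nat.pos_of_ne_zero hc0)]
      omega
    have h2 : -(((s : ℕ) : ℤ) ^ 2 * ((c₀ : ℕ) : ℤ)) = c := by
      have h' : ((c₀ : ℤ)) * (s : ℤ) ^ 2 = (c.natAbs : ℤ) := by exact_mod_cast hdecomp.symm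
      have hcabs : (c.natAbs : ℤ) = -c := by omega
      rw [hcabs] at h'
      linarith
    dsimp only
    rw [hsqf, hsqp, h1, h2]
  · -- values agree
    rintro ⟨⟨l, e, m⟩, t⟩ hσ
    dsimp only
    exact (Int.cast_natCast _).symm
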